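/- Let q be a power of 2 and let f ∈ F_q[X] be any polynomial. Then H is divisible neither by X + Y nor by X + Z in F_q[X,Y,Z]. -/

import Mathlib

open Polynomial

/-- Expansion of `aeval (X i) g` as a sum of monomials. -/
lemma aeval_X_eq_sum {K : Type} [Field K] (i : Fin 3) (g : K[X]) :
    Polynomial.aeval (MvPolynomial.X i : MvPolynomial (Fin 3) K) g =
      g.sum fun n a => MvPolynomial.monomial (Finsupp.single i n) a := by
  rw [Polynomial.aeval_def, Polynomial.eval₂_eq_sum, Polynomial.sum_def, Polynomial.sum_def]
  refine Finset.sum_congr rfl fun n _ => ?_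
  rw [MvPolynomial.X_pow_eq_monomial]
  simp [MvPolynomial.algebraMap_eq, MvPolynomial.C_mul_monomial]

lemma coeff_aeval_X_self {K : Type} [Field K] (g : K[X]) :
    MvPolynomial.coeff (Finsupp.single (0 : Fin 3) 1)
      (Polynomial.aeval (MvPolynomial.X 0 : MvPolynomial (Fin 3) K) g) = g.coeff 1 := by
  rw [aeval_X_eq_sum, Polynomial.sum]
  rw [MvPolynomial.coeff_sum]
  have : ∀ n ∈ g.support, MvPolynomial.coeff (Finsupp.single (0 : Fin 3) 1)
      (MvPolynomial.monomial (Finsupp.single (0 : Fin 3) n) (g.coeff n)) =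
      if n = 1 then g.coeff n else 0 := by
    intro n _
    rw [MvPolynomial.coeff_monomial]
    congr 1
    simp [Finsupp.single_left_inj, (Finsupp.single_injective (0 : Fin 3)).eq_iff]
  rw [Finset.sum_congr rfl this, Finset.sum_ite_eq' g.support 1 (fun n => g.coeff n)]
  by_cases h : (1 : ℕ) ∈ g.support
  · simp [h]
  · simp [h, Polynomial.notMem_support_iff.mp h]

lemma coeff_aeval_X_ne {K : Type} [Field K] (j : Fin 3) (hj : j ≠ 0) (g : K[X]) :
    MvPolynomial.coeff (Finsupp.single (0 : Fin 3) 1)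
      (Polynomial.aeval (MvPolynomial.X j : MvPolynomial (Fin 3) K) g) = 0 := by
  rw [aeval_X_eq_sum, Polynomial.sum]
  rw [MvPolynomial.coeff_sum]
  refine Finset.sum_eq_zero fun n _ => ?_
  rw [MvPolynomial.coeff_monomial, if_neg]
  intro h
  have := DFunLike.congr_fun h 0
  rw [Finsupp.single_eq_of_ne' hj, Finsupp.single_eq_same] at this
  exact one_ne_zero this.symm

/-- The key contradiction: `aeval X₀ g + aeval Xⱼ g + (X₀ + Xⱼ) = 0` is impossible
when `g.coeff 1 = 0` and `j ≠ 0`. -/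
lemma key_contradiction {K : Type} [Field K] (j : Fin 3) (hj : j ≠ 0) (g : K[X])
    (hg : g.coeff 1 = 0)
    (h : Polynomial.aeval (MvPolynomial.X 0 : MvPolynomial (Fin 3) K) g +
      Polynomial.aeval (MvPolynomial.X j : MvPolynomial (Fin 3) K) g +
      (MvPolynomial.X 0 + MvPolynomial.X j) = 0) : False := by
  have hc := congrArg (MvPolynomial.coeff (Finsupp.single (0 : Fin 3) 1)) h
  rw [MvPolynomial.coeff_add, MvPolynomial.coeff_add, MvPolynomial.coeff_add,
    coeff_aeval_X_self, coeff_aeval_X_ne j hj, MvPolynomial.coeff_zero, hg,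
    MvPolynomial.coeff_X, MvPolynomial.coeff_X'] at hc
  rw [if_neg (show ¬ (Finsupp.single j 1 = Finsupp.single (0 : Fin 3) 1) by
    intro hh
    have := DFunLike.congr_fun hh 0
    rw [Finsupp.single_eq_of_ne' hj, Finsupp.single_eq_same] at this
    exact one_ne_zero this.symm)] at hc
  simp at hc

theorem H_not_div_by_X_add_Y_or_X_add_Z
    (m : ℕ) (hm : 0 < m)
    (K : Type) [Field K] [Fintype K] (hK : Fintype.card K = 2 ^ m)
    (f : K[X]) (H : MvPolynomial (Fin 3) K)
    (hH : (MvPolynomial.X 0 + MvPolynomial.X 1) * (MvPolynomial.X 0 + MvPolynomial.X 2) * H =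
      Polynomial.aeval (MvPolynomial.X 0) f + Polynomial.aeval (MvPolynomial.X 1) f +
        Polynomial.aeval (MvPolynomial.X 2) f +
        Polynomial.aeval (MvPolynomial.X 0 + MvPolynomial.X 1 + MvPolynomial.X 2) f +
        (MvPolynomial.X 0 + MvPolynomial.X 1) * (MvPolynomial.X 0 + MvPolynomial.X 2)) :
    ¬ (MvPolynomial.X 0 + MvPolynomial.X 1) ∣ H ∧
      ¬ (MvPolynomial.X 0 + MvPolynomial.X 2) ∣ H := by
  -- First, establish characteristic 2.
  haveI : CharP K 2 := by
    haveI : CharP K (ringChar K) := ringChar.charP K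
    obtain ⟨n, hp, hcard⟩ := FiniteField.card K (ringChar K)
    have hpn : ringChar K ^ (n : ℕ) = 2 ^ m := by rw [← hcard, hK]
    have hp2 : ringChar K = 2 := by
      have hd : ringChar K ∣ 2 ^ m := by
        rw [← hpn]
        exact dvd_pow_self _ (by positivity)
      exact (Nat.prime_dvd_prime_iff_eq hp Nat.prime_two).mp (hp.dvd_of_dvd_pow hd)
    exact ringChar.of_eq hp2
  haveI : CharP K 2 := by
    haveI : CharP K (ringChar K) := ringChar.charP K
    obtain ⟨n, hp, hcard⟩ := FiniteField.card K (ringChar K)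
    have hpn : ringChar K ^ (n : ℕ) = 2 ^ m := by rw [← hcard, hK]
    have hp2 : ringChar K = 2 := by
      have hd : ringChar K ∣ 2 ^ m := by
        rw [← hpn]
        exact dvd_pow_self _ (by positivity)
      exact (Nat.prime_dvd_prime_iff_eq hp Nat.prime_two).mp (hp.dvd_of_dvd_pow hd)
    exact ringChar.of_eq hp2
  haveI : CharP (MvPolynomial (Fin 3) K) 2 :=
    charP_of_injective_algebraMap' (A := MvPolynomial (Fin 3) K) K 2
  have e1 : (MvPolynomial.X 0 : MvPolynomial (Fin 3) K) + MvPolynomial.X 0 = 0 :=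
    CharTwo.add_self_eq_zero _
  have hg : (Polynomial.derivative f).coeff 1 = 0 := by
    rw [Polynomial.coeff_derivative]
    norm_num
    right
    exact CharTwo.two_eq_zero
  constructor
  · rintro ⟨G, hG⟩
    rw [hG] at hH
    have hd := congrArg (MvPolynomial.pderiv (1 : Fin 3)) hH
    simp only [MvPolynomial.pderiv_mul, map_add, Derivation.comp_aeval_eq,
      MvPolynomial.pderiv_X_self,
      MvPolynomial.pderiv_X_of_ne (show (0:Fin 3) ≠ 1 by decide),
      MvPolynomial.pderiv_X_of_ne (show (2:Fin 3) ≠ 1 by decide),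
      smul_eq_mul, zero_add, add_zero, mul_zero, zero_mul, mul_one] at hd
    have hs := congrArg (MvPolynomial.bind₁
      (![MvPolynomial.X 0, MvPolynomial.X 0, MvPolynomial.X 2] :
        Fin 3 → MvPolynomial (Fin 3) K)) hd
    simp only [map_add, map_mul, MvPolynomial.bind₁_X_right, Matrix.cons_val_zero,
      Matrix.cons_val_one, Matrix.head_cons, ← Polynomial.aeval_algHom_apply, map_one,
      Matrix.cons_val_two, Matrix.tail_cons] at hs
    simp only [e1, zero_add, add_zero, mul_zero, zero_mul, map_zero] at hs
    exact key_contradiction 2 (by decide) (Polynomial.derivative f) hg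
      (by linear_combination -hs)
  · rintro ⟨G, hG⟩
    rw [hG] at hH
    have hd := congrArg (MvPolynomial.pderiv (2 : Fin 3)) hH
    simp only [MvPolynomial.pderiv_mul, map_add, Derivation.comp_aeval_eq,
      MvPolynomial.pderiv_X_self,
      MvPolynomial.pderiv_X_of_ne (show (0:Fin 3) ≠ 2 by decide),
      MvPolynomial.pderiv_X_of_ne (show (1:Fin 3) ≠ 2 by decide),
      smul_eq_mul, zero_add, add_zero, mul_zero, zero_mul, mul_one] at hd
    have hs := congrArg (MvPolynomial.bind₁
      (![MvPolynomial.X 0, MvPolynomial.X 1, MvPolynomial.X 0] :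
        Fin 3 → MvPolynomial (Fin 3) K)) hd
    simp only [map_add, map_mul, MvPolynomial.bind₁_X_right, Matrix.cons_val_zero,
      Matrix.cons_val_one, Matrix.head_cons, ← Polynomial.aeval_algHom_apply, map_one,
      Matrix.cons_val_two, Matrix.tail_cons] at hs
    have e2 : (MvPolynomial.X 0 : MvPolynomial (Fin 3) K) + MvPolynomial.X 1 + MvPolynomial.X 0 =
        MvPolynomial.X 1 := by
      rw [add_comm (MvPolynomial.X 0) (MvPolynomial.X 1), add_assoc, e1, add_zero]
    simp only [e1, e2, zero_add, add_zero, mul_zero, zero_mul, map_zero] at hs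
    exact key_contradiction 1 (by decide) (Polynomial.derivative f) hg
      (by linear_combination -hs)
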